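/- Let ρ, ρ̄ be probability densities on ℝ^d, let F: [0,∞) → [0,∞) be C² convex, and suppose there are constants A, c > 0 such that ∫_{{ρ̄ > 0}} 1/F''(ρ̄) dx ≤ A and d_F(ρ(x)|ρ̄(x)) ≥ c F''(ρ̄(x))(ρ̄(x) − ρ(x))² wherever ρ(x) < ρ̄(x). Then ‖ρ − ρ̄‖²_{L¹(ℝ^d)} ≤ (4A/c) ∫ d_F(ρ|ρ̄) dx. -/

import Mathlib

open MeasureTheory

lemma breg_nonneg (F F' F'' : ℝ → ℝ)
    (hFd : ∀ r ≥ (0:ℝ), HasDerivAt F (F' r) r)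
    (hF'd : ∀ r ≥ (0:ℝ), HasDerivAt F' (F'' r) r)
    (hF''nn : ∀ r ≥ (0:ℝ), 0 ≤ F'' r) :
    ∀ a, 0 ≤ a → ∀ b, 0 ≤ b → 0 ≤ F a - F b - F' b * (a - b) := by
  have hmono : MonotoneOn F' (Set.Ici (0:ℝ)) := by
    apply monotoneOn_of_hasDerivWithinAt_nonneg (convex_Ici 0)
      (fun x hx => (hF'd x hx).continuousAt.continuousWithinAt)
      (f' := F'')
    · intro x hx
      rw [interior_Ici] at hx
      exact (hF'd x hx.le).hasDerivWithinAt
    · intro x hx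
      rw [interior_Ici] at hx
      exact hF''nn x hx.le
  intro a ha b hb
  rcases lt_trichotomy a b with h | h | h
  · obtain ⟨ξ, hξ, hs⟩ := exists_hasDerivAt_eq_slope F F' h
      (fun x hx => (hFd x (le_trans ha hx.1)).continuousAt.continuousWithinAt)
      (fun x hx => hFd x (le_of_lt (lt_of_le_of_lt ha hx.1)))
    have hξ0 : (0:ℝ) ≤ ξ := le_trans ha hξ.1.le
    have hle : F' ξ ≤ F' b := hmono hξ0 hb hξ.2.le
    rw [eq_div_iff (sub_ne_zero.mpr h.ne')] at hs
    nlinarith [hle, sub_pos.mpr h]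
  · simp [h]
  · obtain ⟨ξ, hξ, hs⟩ := exists_hasDerivAt_eq_slope F F' h
      (fun x hx => (hFd x (le_trans hb hx.1)).continuousAt.continuousWithinAt)
      (fun x hx => hFd x (le_of_lt (lt_of_le_of_lt hb hx.1)))
    have hξ0 : (0:ℝ) ≤ ξ := le_trans hb hξ.1.le
    have hle : F' b ≤ F' ξ := hmono hb hξ0 hξ.1.le
    rw [eq_div_iff (sub_ne_zero.mpr h.ne')] at hs
    nlinarith [hle, sub_pos.mpr h]

theorem stmt17 (d : ℕ) (hd : 0 < d) (F F' F'' : ℝ → ℝ) (A c : ℝ)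
    (hA : 0 < A) (hc : 0 < c)
    (hFd : ∀ r ≥ (0:ℝ), HasDerivAt F (F' r) r)
    (hF'd : ∀ r ≥ (0:ℝ), HasDerivAt F' (F'' r) r)
    (hF''cont : ContinuousOn F'' (Set.Ici (0:ℝ)))
    (hF''nn : ∀ r ≥ (0:ℝ), 0 ≤ F'' r)
    (hF''pos : ∀ r > (0:ℝ), 0 < F'' r)
    (ρ σ : EuclideanSpace ℝ (Fin d) → ℝ)
    (hρm : Measurable ρ) (hσm : Measurable σ)
    (hρnn : ∀ x, 0 ≤ ρ x) (hσnn : ∀ x, 0 ≤ σ x)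
    (hρi : Integrable ρ) (hσi : Integrable σ)
    (hρ1 : (∫ x, ρ x) = 1) (hσ1 : (∫ x, σ x) = 1)
    (hAi : IntegrableOn (fun x => (F'' (σ x))⁻¹) {x | 0 < σ x})
    (hAbd : (∫ x in {x | 0 < σ x}, (F'' (σ x))⁻¹) ≤ A)
    (hdF : ∀ x, ρ x < σ x →
      c * F'' (σ x) * (σ x - ρ x) ^ 2 ≤
        F (ρ x) - F (σ x) - F' (σ x) * (ρ x - σ x))
    (hdFi : Integrable (fun x => F (ρ x) - F (σ x) - F' (σ x) * (ρ x - σ x))) :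
    (∫ x, |ρ x - σ x|) ^ 2 ≤
      4 * A / c * ∫ x, (F (ρ x) - F (σ x) - F' (σ x) * (ρ x - σ x)) := by
  classical
  set dF : EuclideanSpace ℝ (Fin d) → ℝ :=
    fun x => F (ρ x) - F (σ x) - F' (σ x) * (ρ x - σ x) with hdFdef
  have hdFnn : ∀ x, 0 ≤ dF x := fun x =>
    breg_nonneg F F' F'' hFd hF'd hF''nn (ρ x) (hρnn x) (σ x) (hσnn x)
  set S : Set (EuclideanSpace ℝ (Fin d)) := {x | ρ x < σ x} with hSdef
  have hS : MeasurableSet S := measurableSet_lt hρm hσm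
  set w : EuclideanSpace ℝ (Fin d) → ℝ := fun x => F'' (σ x) with hwdef
  have hwnn : ∀ x, 0 ≤ w x := fun x => hF''nn _ (hσnn x)
  have hwm : Measurable w := by
    have hG : Continuous (fun r : ℝ => F'' (max r 0)) :=
      hF''cont.comp_continuous (continuous_id.max continuous_const)
        (fun r => le_max_right r 0)
    have : w = (fun r : ℝ => F'' (max r 0)) ∘ σ := by
      funext x
      simp only [hwdef, Function.comp_apply, max_eq_left (hσnn x)]
    rw [this]; exact hG.measurable.comp hσm
  have hSsub : S ⊆ {x | 0 < σ x} := fun x hx => lt_of_le_of_lt (hρnn x) hx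
  have hwpos : ∀ x ∈ S, 0 < w x := fun x hx => hF''pos _ (hSsub hx)
  -- Step A : ∫ |ρ - σ| = 2 ∫_S (σ - ρ)
  have hsub : Integrable (fun x => σ x - ρ x) := hσi.sub hρi
  have habs : Integrable (fun x => |ρ x - σ x|) := (hρi.sub hσi).abs
  have h0 : (∫ x, (σ x - ρ x)) = 0 := by
    rw [integral_sub hσi hρi, hσ1, hρ1]; ring
  have hsplit0 : (∫ x in S, (σ x - ρ x)) + (∫ x in Sᶜ, (σ x - ρ x)) = 0 := by
    rw [integral_add_compl hS hsub, h0]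
  have hIS : (∫ x in S, |ρ x - σ x|) = ∫ x in S, (σ x - ρ x) := by
    apply setIntegral_congr_fun hS
    intro x hx
    have hlt : ρ x < σ x := hx
    show |ρ x - σ x| = σ x - ρ x
    rw [abs_of_neg (sub_neg.mpr hlt)]; ring
  have hISc : (∫ x in Sᶜ, |ρ x - σ x|) = ∫ x in Sᶜ, (ρ x - σ x) := by
    apply setIntegral_congr_fun hS.compl
    intro x hx
    have : σ x ≤ ρ x := not_lt.mp hx
    exact abs_of_nonneg (by linarith)
  have hIScneg : (∫ x in Sᶜ, (ρ x - σ x)) = ∫ x in S, (σ x - ρ x) := by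
    have h1 : (∫ x in Sᶜ, (ρ x - σ x)) = -∫ x in Sᶜ, (σ x - ρ x) := by
      rw [← integral_neg]; congr 1 with x; ring
    rw [h1]; linarith [hsplit0]
  have hA1 : (∫ x, |ρ x - σ x|) = 2 * ∫ x in S, (σ x - ρ x) := by
    rw [← integral_add_compl hS habs, hIS, hISc, hIScneg]; ring
  set I := ∫ x in S, (σ x - ρ x) with hIdef
  have hI0 : 0 ≤ I := setIntegral_nonneg hS fun x hx => sub_nonneg.mpr (le_of_lt hx)
  -- integrability facts on S
  have hwinvI : IntegrableOn (fun x => (w x)⁻¹) S := hAi.mono_set hSsub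
  have hg2m : Measurable (fun x => w x * (σ x - ρ x) ^ 2) :=
    hwm.mul ((hσm.sub hρm).pow_const 2)
  have hg2bdd : ∀ x ∈ S, w x * (σ x - ρ x) ^ 2 ≤ c⁻¹ * dF x := by
    intro x hx
    have h := hdF x hx
    show F'' (σ x) * (σ x - ρ x) ^ 2 ≤ c⁻¹ * (F (ρ x) - F (σ x) - F' (σ x) * (ρ x - σ x))
    rw [inv_mul_eq_div, le_div_iff₀ hc]
    nlinarith [h]
  have hg2I : IntegrableOn (fun x => w x * (σ x - ρ x) ^ 2) S := by
    apply Integrable.mono' ((hdFi.const_mul c⁻¹).integrableOn)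
      hg2m.aestronglyMeasurable.restrict
    rw [ae_restrict_iff' hS]
    refine ae_of_all _ (fun x hx => ?_)
    rw [Real.norm_eq_abs, abs_of_nonneg (mul_nonneg (hwnn x) (sq_nonneg _))]
    exact hg2bdd x hx
  -- Cauchy-Schwarz on S
  set f : EuclideanSpace ℝ (Fin d) → ℝ := fun x => Real.sqrt ((w x)⁻¹) with hfdef
  set g : EuclideanSpace ℝ (Fin d) → ℝ :=
    fun x => Real.sqrt (w x) * (σ x - ρ x) with hgdef
  have hfm : Measurable f := Real.continuous_sqrt.measurable.comp hwm.inv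
  have hgm : Measurable g :=
    (Real.continuous_sqrt.measurable.comp hwm).mul (hσm.sub hρm)
  have hf2 : ∀ x, f x ^ 2 = (w x)⁻¹ := fun x =>
    Real.sq_sqrt (inv_nonneg.mpr (hwnn x))
  have hg2 : ∀ x, g x ^ 2 = w x * (σ x - ρ x) ^ 2 := fun x => by
    rw [hgdef]; simp only
    rw [mul_pow, Real.sq_sqrt (hwnn x)]
  have hfL2 : MemLp f (ENNReal.ofReal 2) (volume.restrict S) := by
    rw [show (ENNReal.ofReal 2) = 2 by norm_num,
      memLp_two_iff_integrable_sq hfm.aestronglyMeasurable.restrict]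
    exact hwinvI.congr_fun (fun x _ => (hf2 x).symm) hS
  have hgL2 : MemLp g (ENNReal.ofReal 2) (volume.restrict S) := by
    rw [show (ENNReal.ofReal 2) = 2 by norm_num,
      memLp_two_iff_integrable_sq hgm.aestronglyMeasurable.restrict]
    exact hg2I.congr_fun (fun x _ => (hg2 x).symm) hS
  have hpq : Real.HolderConjugate 2 2 := Real.HolderConjugate.two_two
  have hgnn : 0 ≤ᵐ[volume.restrict S] g := by
    refine (ae_restrict_iff' hS).2 ?_
    exact ae_of_all _ fun x hx =>
      mul_nonneg (Real.sqrt_nonneg _) (sub_nonneg.mpr (le_of_lt hx))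
  have hCS := integral_mul_le_Lp_mul_Lq_of_nonneg hpq
    (μ := volume.restrict S) (f := f) (g := g)
    (ae_of_all _ (fun x => Real.sqrt_nonneg _))
    hgnn hfL2 hgL2
  have hfg : (∫ x in S, f x * g x) = I := by
    apply setIntegral_congr_fun hS
    intro x hx
    have hw : 0 < w x := hwpos x hx
    show f x * g x = σ x - ρ x
    rw [hfdef, hgdef]; simp only
    rw [Real.sqrt_inv, ← mul_assoc, inv_mul_cancel₀ (Real.sqrt_ne_zero'.mpr hw), one_mul]
  set a := ∫ x in S, f x ^ (2:ℝ) with hadef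
  set b := ∫ x in S, g x ^ (2:ℝ) with hbdef
  have ha_eq : a = ∫ x in S, (w x)⁻¹ := by
    apply setIntegral_congr_fun hS
    intro x _
    show f x ^ (2:ℝ) = (w x)⁻¹
    rw [show f x ^ (2:ℝ) = f x ^ (2:ℕ) by rw [← Real.rpow_natCast]; norm_num]
    exact hf2 x
  have hb_eq : b = ∫ x in S, w x * (σ x - ρ x) ^ 2 := by
    apply setIntegral_congr_fun hS
    intro x _
    show g x ^ (2:ℝ) = w x * (σ x - ρ x) ^ 2
    rw [show g x ^ (2:ℝ) = g x ^ (2:ℕ) by rw [← Real.rpow_natCast]; norm_num]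
    exact hg2 x
  have ha0 : 0 ≤ a := by
    rw [ha_eq]
    exact setIntegral_nonneg hS fun x _ => inv_nonneg.mpr (hwnn x)
  have hb0 : 0 ≤ b := by
    rw [hb_eq]
    exact setIntegral_nonneg hS fun x _ => mul_nonneg (hwnn x) (sq_nonneg _)
  have haA : a ≤ A := by
    rw [ha_eq]
    refine le_trans (setIntegral_mono_set hAi ?_ (HasSubset.Subset.eventuallyLE hSsub)) hAbd
    exact ae_of_all _ fun x => inv_nonneg.mpr (hF''nn _ (hσnn x))
  set T := ∫ x, dF x with hTdef
  have hT0 : 0 ≤ T := integral_nonneg hdFnn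
  have hbT : b ≤ c⁻¹ * T := by
    rw [hb_eq]
    calc (∫ x in S, w x * (σ x - ρ x) ^ 2)
        ≤ ∫ x in S, c⁻¹ * dF x :=
          setIntegral_mono_on hg2I (hdFi.const_mul c⁻¹).integrableOn hS hg2bdd
      _ = c⁻¹ * ∫ x in S, dF x := by rw [MeasureTheory.integral_const_mul]
      _ ≤ c⁻¹ * T := by
          apply mul_le_mul_of_nonneg_left _ (inv_nonneg.mpr hc.le)
          exact setIntegral_le_integral hdFi (ae_of_all _ hdFnn)
  -- combine
  have hCS' : I ≤ a ^ ((1:ℝ)/2) * b ^ ((1:ℝ)/2) := by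
    rw [← hfg]
    exact hCS
  have hsq : (a ^ ((1:ℝ)/2) * b ^ ((1:ℝ)/2)) ^ 2 = a * b := by
    rw [mul_pow, ← Real.rpow_natCast (a ^ ((1:ℝ)/2)) 2,
      ← Real.rpow_natCast (b ^ ((1:ℝ)/2)) 2,
      ← Real.rpow_mul ha0, ← Real.rpow_mul hb0]
    norm_num
  have hI2 : I ^ 2 ≤ a * b := by
    rw [← hsq]
    exact pow_le_pow_left₀ hI0 hCS' 2
  have hab : a * b ≤ A * (c⁻¹ * T) :=
    mul_le_mul haA hbT hb0 hA.le
  have hfinal : 4 * A / c * T = 4 * (A * (c⁻¹ * T)) := by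
    field_simp
  rw [hA1, show (2 * I) ^ 2 = 4 * I ^ 2 by ring, hfinal]
  linarith [hI2, hab]
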